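/- For the simple symmetric random walk on ℤ, the expected range after n steps satisfies E[R_n] ≍ √n, i.e., there exist constants c, C > 0 such that c·√n ≤ E[R_n] ≤ C·√n for all n ≥ 1. -/

import Mathlib

open MeasureTheory Finset
open scoped NNReal ENNReal
open MeasureTheory Finset

/-- Discrete IVT: image of a unit-step walk contains the interval between endpoints. -/
lemma walk_icc_subset (f : ℕ → ℤ) : ∀ n : ℕ, (∀ k < n, (f (k+1) - f k).natAbs ≤ 1) →
    Finset.Icc (min (f 0) (f n)) (max (f 0) (f n)) ⊆ (range (n+1)).image f := by
  intro n
  induction n with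
  | zero => intro _ m hm; simp at hm ⊢; omega
  | succ n ih =>
    intro hstep m hm
    simp only [Finset.mem_Icc] at hm
    have hs : (f (n+1) - f n).natAbs ≤ 1 := hstep n (by omega)
    by_cases hmn : m = f (n+1)
    · exact Finset.mem_image.2 ⟨n+1, by simp, hmn.symm⟩
    · have : m ∈ Finset.Icc (min (f 0) (f n)) (max (f 0) (f n)) := by
        simp only [Finset.mem_Icc]
        simp only [le_min_iff, min_le_iff, le_max_iff, max_le_iff] at hm ⊢
        omega
      have := ih (fun k hk => hstep k (by omega)) this
      exact Finset.image_subset_image (by intro x hx; simp at hx ⊢; omega) this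

lemma walk_card_ge (f : ℕ → ℤ) (n : ℕ) (h0 : f 0 = 0)
    (hstep : ∀ k < n, (f (k+1) - f k).natAbs ≤ 1) :
    (f n).natAbs + 1 ≤ ((range (n+1)).image f).card := by
  have h := walk_icc_subset f n hstep
  have := Finset.card_le_card h
  rw [Int.card_Icc] at this
  rw [h0] at this
  have h2 : (max 0 (f n) + 1 - min 0 (f n)).toNat = (f n).natAbs + 1 := by
    rcases le_or_gt 0 (f n) with h3 | h3
    · rw [max_eq_right h3, min_eq_left h3]; omega
    · rw [max_eq_left h3.le, min_eq_right h3.le]; omega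
  omega

lemma walk_card_le (f : ℕ → ℤ) (n : ℕ) :
    ((range (n+1)).image f).card ≤ 2 * ((range (n+1)).sup fun k => (f k).natAbs) + 1 := by
  set B : ℕ := (range (n+1)).sup fun k => (f k).natAbs with hB
  have h : (range (n+1)).image f ⊆ Finset.Icc (-(B:ℤ)) B := by
    intro m hm
    simp only [Finset.mem_image] at hm
    obtain ⟨k, hk, rfl⟩ := hm
    have : (f k).natAbs ≤ B := Finset.le_sup (f := fun k => (f k).natAbs) hk
    simp only [Finset.mem_Icc]; omega
  have := Finset.card_le_card h
  rw [Int.card_Icc] at this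
  omega

section
variable {Ω : Type*} [MeasurableSpace Ω] {ℙ : Measure Ω} [IsProbabilityMeasure ℙ]

lemma bdd_integrable {f : Ω → ℝ} {C : ℝ} (hf : Measurable f)
    (hb : ∀ᵐ ω ∂ℙ, |f ω| ≤ C) : Integrable f ℙ :=
  (integrable_const C).mono' hf.aestronglyMeasurable (by simpa [Real.norm_eq_abs] using hb)

variable {Y : ℕ → Ω → ℝ}

lemma sum_abs_le (hae : ∀ᵐ ω ∂ℙ, ∀ k, Y k ω = 1 ∨ Y k ω = -1) (n : ℕ) :
    ∀ᵐ ω ∂ℙ, |∑ k ∈ range n, Y k ω| ≤ n := by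
  filter_upwards [hae] with ω hω
  calc |∑ k ∈ range n, Y k ω| ≤ ∑ k ∈ range n, |Y k ω| := Finset.abs_sum_le_sum_abs _ _
    _ ≤ ∑ _k ∈ range n, (1:ℝ) := Finset.sum_le_sum (fun k _ => by rcases hω k with h | h <;> simp [h])
    _ = n := by simp

lemma moments (hm : ∀ k, Measurable (Y k))
    (hindep : ProbabilityTheory.iIndepFun Y ℙ)
    (hae : ∀ᵐ ω ∂ℙ, ∀ k, Y k ω = 1 ∨ Y k ω = -1)
    (hEY : ∀ k, ∫ ω, Y k ω ∂ℙ = 0) :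
    (∀ n, ∫ ω, (∑ k ∈ range n, Y k ω)^2 ∂ℙ = n) ∧
    (∀ n, ∫ ω, (∑ k ∈ range n, Y k ω)^4 ∂ℙ ≤ 3 * (n:ℝ)^2) := by
  set Sr : ℕ → Ω → ℝ := fun n ω => ∑ k ∈ range n, Y k ω with hSr
  have hSm : ∀ n, Measurable (Sr n) := fun n => Finset.measurable_sum _ (fun k _ => hm k)
  have hSb : ∀ n, ∀ᵐ ω ∂ℙ, |Sr n ω| ≤ n := fun n => sum_abs_le hae n
  have hYb : ∀ k, ∀ᵐ ω ∂ℙ, |Y k ω| ≤ 1 := fun k => by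
    filter_upwards [hae] with ω hω; rcases hω k with h | h <;> simp [h]
  -- integrability of products Sr^p * Y^q
  have hprodInt : ∀ n p q : ℕ, Integrable (fun ω => Sr n ω ^ p * Y n ω ^ q) ℙ := by
    intro n p q
    refine bdd_integrable (C := (n:ℝ)^p) ((hSm n).pow_const p |>.mul ((hm n).pow_const q)) ?_
    filter_upwards [hSb n, hYb n] with ω h1 h2
    rw [abs_mul, abs_pow, abs_pow]
    have e1 : |Sr n ω| ^ p ≤ (n:ℝ)^p := pow_le_pow_left₀ (abs_nonneg _) h1 p
    have e2 : |Y n ω| ^ q ≤ 1 := pow_le_one₀ (abs_nonneg _) h2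
    nlinarith [pow_nonneg (abs_nonneg (Sr n ω)) p, pow_nonneg (abs_nonneg (Y n ω)) q]
  have hSint : ∀ n p : ℕ, Integrable (fun ω => Sr n ω ^ p) ℙ := by
    intro n p
    simpa using hprodInt n p 0
  -- independence of Sr n ^ p and Y n ^ q
  have hSY : ∀ n, ProbabilityTheory.IndepFun (Sr n) (Y n) ℙ := by
    intro n
    have h := hindep.indepFun_finset_sum_of_notMem hm (Finset.notMem_range_self (n := n))
    have he : (∑ k ∈ range n, Y k) = Sr n := by ext ω; simp [hSr]
    rwa [he] at h
  have hmul : ∀ n p q : ℕ, ∫ ω, Sr n ω ^ p * Y n ω ^ q ∂ℙ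
      = (∫ ω, Sr n ω ^ p ∂ℙ) * ∫ ω, Y n ω ^ q ∂ℙ := by
    intro n p q
    have hc : ProbabilityTheory.IndepFun (fun ω => Sr n ω ^ p) (fun ω => Y n ω ^ q) ℙ :=
      (hSY n).comp (measurable_id.pow_const p) (measurable_id.pow_const q)
    have h := hc.integral_mul_eq_mul_integral
      (hSint n p).aestronglyMeasurable ((hm n).pow_const q).aestronglyMeasurable
    simpa using h
  -- moments of Y
  have hY2 : ∀ k, ∫ ω, Y k ω ^ 2 ∂ℙ = 1 := by
    intro k
    rw [show (1:ℝ) = ∫ _ω, (1:ℝ) ∂ℙ by simp]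
    refine integral_congr_ae ?_
    filter_upwards [hae] with ω hω; rcases hω k with h | h <;> simp [h]
  have hY3 : ∀ k, ∫ ω, Y k ω ^ 3 ∂ℙ = 0 := by
    intro k
    rw [← hEY k]
    refine integral_congr_ae ?_
    filter_upwards [hae] with ω hω; rcases hω k with h | h <;> simp [h]; norm_num [h]
  have hY4 : ∀ k, ∫ ω, Y k ω ^ 4 ∂ℙ = 1 := by
    intro k
    rw [show (1:ℝ) = ∫ _ω, (1:ℝ) ∂ℙ by simp]
    refine integral_congr_ae ?_
    filter_upwards [hae] with ω hω; rcases hω k with h | h <;> norm_num [h]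
  -- second moment
  have hb : ∀ n, ∫ ω, Sr n ω ^ 2 ∂ℙ = n := by
    intro n
    induction n with
    | zero => simp [hSr]
    | succ n ih =>
      have hexp : ∀ ω, Sr (n+1) ω ^ 2
          = Sr n ω ^ 2 + (2 * (Sr n ω ^ 1 * Y n ω ^ 1) + Y n ω ^ 2) := by
        intro ω; simp only [hSr, Finset.sum_range_succ]; ring
      have j1 : Integrable (fun ω => 2 * (Sr n ω ^ 1 * Y n ω ^ 1)) ℙ := (hprodInt n 1 1).const_mul 2
      have j2 : Integrable (fun ω => Y n ω ^ 2) ℙ := by simpa using hprodInt n 0 2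
      have j12 : Integrable (fun ω => 2 * (Sr n ω ^ 1 * Y n ω ^ 1) + Y n ω ^ 2) ℙ := j1.add j2
      rw [integral_congr_ae (Filter.Eventually.of_forall hexp), integral_add (hSint n 2) j12,
        integral_add j1 j2, integral_const_mul (2:ℝ) _, hmul n 1 1, ih]
      simp only [pow_one] at *
      rw [hEY n]
      have := hY2 n
      push_cast
      rw [this]; ring
    -- fourth moment
  have ha : ∀ n, ∫ ω, Sr n ω ^ 4 ∂ℙ ≤ 3 * (n:ℝ)^2 := by
    intro n
    induction n with
    | zero => simp [hSr]
    | succ n ih =>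
      have hexp : ∀ ω, Sr (n+1) ω ^ 4
          = Sr n ω ^ 4 + (4 * (Sr n ω ^ 3 * Y n ω ^ 1) + (6 * (Sr n ω ^ 2 * Y n ω ^ 2)
            + (4 * (Sr n ω ^ 1 * Y n ω ^ 3) + Y n ω ^ 4))) := by
        intro ω; simp only [hSr, Finset.sum_range_succ]; ring
      have i1 : Integrable (fun ω => 4 * (Sr n ω ^ 3 * Y n ω ^ 1)) ℙ := (hprodInt n 3 1).const_mul 4
      have i2 : Integrable (fun ω => 6 * (Sr n ω ^ 2 * Y n ω ^ 2)) ℙ := (hprodInt n 2 2).const_mul 6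
      have i3 : Integrable (fun ω => 4 * (Sr n ω ^ 1 * Y n ω ^ 3)) ℙ := (hprodInt n 1 3).const_mul 4
      have i4 : Integrable (fun ω => Y n ω ^ 4) ℙ := by simpa using hprodInt n 0 4
      have i34 : Integrable (fun ω => 4 * (Sr n ω ^ 1 * Y n ω ^ 3) + Y n ω ^ 4) ℙ := i3.add i4
      have i234 : Integrable (fun ω => 6 * (Sr n ω ^ 2 * Y n ω ^ 2)
          + (4 * (Sr n ω ^ 1 * Y n ω ^ 3) + Y n ω ^ 4)) ℙ := i2.add i34
      have i1234 : Integrable (fun ω => 4 * (Sr n ω ^ 3 * Y n ω ^ 1)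
          + (6 * (Sr n ω ^ 2 * Y n ω ^ 2) + (4 * (Sr n ω ^ 1 * Y n ω ^ 3) + Y n ω ^ 4))) ℙ := i1.add i234
      rw [integral_congr_ae (Filter.Eventually.of_forall hexp),
        integral_add (hSint n 4) i1234, integral_add i1 i234, integral_add i2 i34,
        integral_add i3 i4,
        integral_const_mul (4:ℝ) _, integral_const_mul (6:ℝ) _, integral_const_mul (4:ℝ) _,
        hmul n 3 1, hmul n 2 2, hmul n 1 3]
      simp only [pow_one, hEY n, hY3 n, hY4 n, hY2 n, mul_zero, zero_mul, mul_one]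
      have h2 := hb n
      push_cast
      rw [h2]
      nlinarith [ih]
  exact ⟨hb, ha⟩

end

section
variable {Ω : Type*} [MeasurableSpace Ω] {ℙ : Measure Ω} [IsProbabilityMeasure ℙ] {Y : ℕ → Ω → ℝ}

lemma bdd_integrable' {f : Ω → ℝ} {C : ℝ} (hf : Measurable f)
    (hb : ∀ᵐ ω ∂ℙ, |f ω| ≤ C) : Integrable f ℙ :=
  (integrable_const C).mono' hf.aestronglyMeasurable (by simpa [Real.norm_eq_abs] using hb)

lemma sum_abs_le' (hae : ∀ᵐ ω ∂ℙ, ∀ k, Y k ω = 1 ∨ Y k ω = -1) (n : ℕ) :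
    ∀ᵐ ω ∂ℙ, |∑ k ∈ range n, Y k ω| ≤ n := by
  filter_upwards [hae] with ω hω
  calc |∑ k ∈ range n, Y k ω| ≤ ∑ k ∈ range n, |Y k ω| := Finset.abs_sum_le_sum_abs _ _
    _ ≤ ∑ _k ∈ range n, (1:ℝ) := Finset.sum_le_sum (fun k _ => by rcases hω k with h | h <;> simp [h])
    _ = n := by simp

lemma tail_bound (hm : ∀ k, Measurable (Y k))
    (hindep : ProbabilityTheory.iIndepFun Y ℙ)
    (hae : ∀ᵐ ω ∂ℙ, ∀ k, Y k ω = 1 ∨ Y k ω = -1)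
    (hEY : ∀ k, ∫ ω, Y k ω ∂ℙ = 0)
    (hsq : ∀ m, ∫ ω, (∑ k ∈ range m, Y k ω)^2 ∂ℙ = m)
    (n t : ℕ) (hn : 1 ≤ n) :
    (ℙ {ω | ∃ k, k ≤ n ∧ ((t:ℝ)+1) ≤ |∑ j ∈ range k, Y j ω|}).toReal
      ≤ (n:ℝ) / ((t:ℝ)+1)^2 := by
  classical
  have hsm : ∀ k, StronglyMeasurable (Y k) := fun k => (hm k).stronglyMeasurable
  set 𝓕 : Filtration ℕ _ := Filtration.natural Y hsm with h𝓕
  set g : ℕ → Ω → ℝ := fun k ω => ∑ j ∈ range (k+1), Y j ω with hg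
  set f : ℕ → Ω → ℝ := fun k ω => (g k ω)^2 with hf
  have hgm : ∀ k, Measurable (g k) := fun k => Finset.measurable_sum _ (fun j _ => hm j)
  have hgsm : ∀ i, StronglyMeasurable[𝓕 i] (g i) := by
    intro i
    refine Finset.stronglyMeasurable_fun_sum _ (fun j hj => ?_)
    exact (Filtration.stronglyAdapted_natural hsm j).mono
      (𝓕.mono (Nat.lt_succ_iff.1 (Finset.mem_range.1 hj)))
  have hadp : StronglyAdapted 𝓕 f := by
    intro i
    have h2 : StronglyMeasurable[𝓕 i] (fun ω => g i ω * g i ω) := (hgsm i).mul (hgsm i)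
    have he : (fun ω => g i ω * g i ω) = f i := by funext ω; simp [hf]; ring
    rwa [he] at h2
  have hgb : ∀ i, ∀ᵐ ω ∂ℙ, |g i ω| ≤ (i+1:ℝ) := by
    intro i
    filter_upwards [sum_abs_le' hae (i+1)] with ω h
    simpa using h
  have hfi : ∀ i, Integrable (f i) ℙ := by
    intro i
    refine bdd_integrable' (C := ((i:ℝ)+1)^2) ((hgm i).pow_const 2) ?_
    filter_upwards [hgb i] with ω h
    rw [abs_pow]
    have h0 := abs_nonneg (g i ω)
    nlinarith
  have hYint : ∀ k, Integrable (Y k) ℙ := by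
    intro k
    refine bdd_integrable' (C := 1) (hm k) ?_
    filter_upwards [hae] with ω h; rcases h k with h | h <;> simp [h]
  have hcond : ∀ i, f i ≤ᵐ[ℙ] ℙ[f (i+1)|𝓕 i] := by
    intro i
    have hcross : Integrable (fun ω => (2 * g i ω) * Y (i+1) ω) ℙ := by
      refine bdd_integrable' (C := 2*((i:ℝ)+1)) (((hgm i).const_mul 2).mul (hm (i+1))) ?_
      filter_upwards [hgb i, hae] with ω h1 h2
      have h3 : |Y (i+1) ω| ≤ 1 := by rcases h2 (i+1) with h | h <;> simp [h]
      rw [abs_mul, abs_mul, abs_two]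
      have h5 : 2 * |g i ω| * |Y (i+1) ω| ≤ (2 * ((i:ℝ)+1)) * 1 :=
        mul_le_mul (by linarith) h3 (abs_nonneg _) (by positivity)
      linarith
    have hb2 : Integrable (fun ω => Y (i+1) ω ^ 2) ℙ := by
      refine bdd_integrable' (C := 1) ((hm (i+1)).pow_const 2) ?_
      filter_upwards [hae] with ω h; rcases h (i+1) with h | h <;> simp [h]
    have hsumInt : Integrable (fun ω => (2 * g i ω) * Y (i+1) ω + Y (i+1) ω ^ 2) ℙ :=
      hcross.add hb2
    have hdecomp : f (i+1) = (fun ω => f i ω) + (fun ω => (2 * g i ω) * Y (i+1) ω + Y (i+1) ω ^ 2) := by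
      funext ω; simp only [hf, hg, Pi.add_apply, Finset.sum_range_succ]; ring
    have e1 : ℙ[f (i+1)|𝓕 i] =ᵐ[ℙ]
        ℙ[f i|𝓕 i] + ℙ[(fun ω => (2 * g i ω) * Y (i+1) ω + Y (i+1) ω ^ 2)|𝓕 i] := by
      rw [hdecomp]
      exact condExp_add (hfi i) hsumInt _
    have e2 : ℙ[(fun ω => (2 * g i ω) * Y (i+1) ω + Y (i+1) ω ^ 2)|𝓕 i] =ᵐ[ℙ]
        ℙ[(fun ω => (2 * g i ω) * Y (i+1) ω)|𝓕 i] + ℙ[(fun ω => Y (i+1) ω ^ 2)|𝓕 i] :=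
      condExp_add hcross hb2 _
    have e3 : ℙ[f i|𝓕 i] = f i :=
      condExp_of_stronglyMeasurable (𝓕.le i) (hadp i) (hfi i)
    have e4 : ℙ[(fun ω => (2 * g i ω) * Y (i+1) ω)|𝓕 i] =ᵐ[ℙ]
        (fun ω => 2 * g i ω) * ℙ[Y (i+1)|𝓕 i] :=
      condExp_mul_of_stronglyMeasurable_left ((hgsm i).const_mul 2) hcross (hYint (i+1))
    have e5 : ℙ[Y (i+1)|𝓕 i] =ᵐ[ℙ] fun _ => ∫ ω, Y (i+1) ω ∂ℙ :=
      ProbabilityTheory.iIndepFun.condExp_natural_ae_eq_of_lt hsm hindep (Nat.lt_succ_self i)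
    have e6 : 0 ≤ᵐ[ℙ] ℙ[(fun ω => Y (i+1) ω ^ 2)|𝓕 i] :=
      condExp_nonneg (Filter.Eventually.of_forall (fun ω => sq_nonneg _))
    filter_upwards [e1, e2, e4, e5, e6] with ω h1 h2 h4 h5 h6
    have h6' : (0:ℝ) ≤ (ℙ[(fun ω => Y (i+1) ω ^ 2)|𝓕 i]) ω := by simpa using h6
    rw [h1, Pi.add_apply, e3, h2, Pi.add_apply, h4, Pi.mul_apply, h5, hEY (i+1)]
    simp only [mul_zero, zero_add]
    linarith
  have hsub : Submartingale f 𝓕 ℙ := submartingale_nat hadp hfi hcond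
  have hnonneg : (0 : ℕ → Ω → ℝ) ≤ f := fun i ω => sq_nonneg _
  set ε : ℝ≥0 := ((t:ℝ≥0)+1)^2 with hε
  have hmax := maximal_ineq hsub hnonneg (ε := ε) (n - 1)
  set E : Set Ω := {ω | (ε:ℝ) ≤ (range ((n-1) + 1)).sup' nonempty_range_add_one fun k => f k ω}
    with hE
  have hcast : (ε : ℝ) = ((t:ℝ)+1)^2 := by push_cast [hε]; ring
  have hset : {ω | ∃ k, k ≤ n ∧ ((t:ℝ)+1) ≤ |∑ j ∈ range k, Y j ω|} = E := by
    ext ω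
    simp only [hE, Set.mem_setOf_eq, Finset.le_sup'_iff, Finset.mem_range]
    constructor
    · rintro ⟨k, hk, habs⟩
      rcases Nat.eq_zero_or_pos k with rfl | hkpos
      · exfalso
        have h0 : (0:ℝ) ≤ (t:ℝ) := Nat.cast_nonneg t
        simp at habs
        linarith
      · refine ⟨k - 1, by omega, ?_⟩
        rw [hcast]
        have : g (k-1) ω = ∑ j ∈ range k, Y j ω := by
          simp only [hg, Nat.sub_add_cancel hkpos]
        rw [hf]
        have h0 : ((t:ℝ)+1) ≤ |g (k-1) ω| := by rw [this]; exact habs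
        calc ((t:ℝ)+1)^2 ≤ |g (k-1) ω|^2 := by
              have ht : (0:ℝ) ≤ (t:ℝ)+1 := by positivity
              nlinarith
          _ = g (k-1) ω ^2 := sq_abs _
    · rintro ⟨j, hj, hge⟩
      refine ⟨j + 1, by omega, ?_⟩
      rw [hcast, hf] at hge
      have : ∑ i ∈ range (j+1), Y i ω = g j ω := rfl
      rw [this]
      have h8 : ((t:ℝ)+1)^2 ≤ |g j ω|^2 := by rw [sq_abs]; exact hge
      have h9 : (0:ℝ) ≤ (t:ℝ)+1 := by positivity
      nlinarith [abs_nonneg (g j ω)]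
  have hEmeas : ∫ ω in E, f (n-1) ω ∂ℙ ≤ (n:ℝ) := by
    have h1 : ∫ ω in E, f (n-1) ω ∂ℙ ≤ ∫ ω, f (n-1) ω ∂ℙ :=
      setIntegral_le_integral (hfi _) (Filter.Eventually.of_forall (fun ω => sq_nonneg _))
    have h2 : ∫ ω, f (n-1) ω ∂ℙ = ((n-1 : ℕ) + 1 : ℕ) := by
      simpa [hf, hg] using hsq ((n-1)+1)
    rw [h2] at h1
    have : ((n-1:ℕ) + 1 : ℕ) = n := by omega
    rw [this] at h1
    exact h1
  -- from ε • ℙ E ≤ ofReal (setIntegral) ≤ ofReal n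
  have hmax2 : (ε : ℝ≥0∞) * ℙ E ≤ ENNReal.ofReal (n:ℝ) :=
    le_trans hmax (ENNReal.ofReal_le_ofReal hEmeas)
  have hfin : ℙ E ≠ ⊤ := measure_ne_top _ _
  have htr : (ε:ℝ) * (ℙ E).toReal ≤ (n:ℝ) := by
    have := ENNReal.toReal_mono (by simp) hmax2
    rw [ENNReal.toReal_mul, ENNReal.toReal_ofReal (by positivity)] at this
    simpa using this
  rw [hset]
  rw [hcast] at htr
  have hpos : (0:ℝ) < ((t:ℝ)+1)^2 := by positivity
  rw [div_eq_inv_mul, ← hcast]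
  calc (ℙ E).toReal ≤ (((t:ℝ)+1)^2)⁻¹ * (n:ℝ) := by
        rw [inv_mul_eq_div, le_div_iff₀ hpos]
        linarith [htr]
    _ = _ := by rw [hcast]
end

section
variable {Ω : Type*} [MeasurableSpace Ω] {ℙ : Measure Ω} [IsProbabilityMeasure ℙ]

set_option maxHeartbeats 1000000 in
lemma first_abs_moment {W : Ω → ℝ} (hWm : Measurable W) {n : ℕ} (hn : 1 ≤ n)
    (hWb : ∀ᵐ ω ∂ℙ, |W ω| ≤ n)
    (hsq : ∫ ω, W ω ^ 2 ∂ℙ = n) (hquart : ∫ ω, W ω ^ 4 ∂ℙ ≤ 3 * (n:ℝ)^2) :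
    Real.sqrt n / 18 ≤ ∫ ω, |W ω| ∂ℙ := by
  classical
  have hn1 : (1:ℝ) ≤ (n:ℝ) := by exact_mod_cast hn
  set A : Set Ω := {ω | (n:ℝ)/2 ≤ W ω ^ 2} with hA
  have hAmeas : MeasurableSet A := measurableSet_le measurable_const (hWm.pow_const 2)
  set ind : Ω → ℝ := A.indicator (fun _ => (1:ℝ)) with hind
  have hindm : Measurable ind := measurable_const.indicator hAmeas
  have hW2int : Integrable (fun ω => W ω ^ 2) ℙ := by
    refine (integrable_const ((n:ℝ)^2)).mono' ((hWm.pow_const 2).aestronglyMeasurable) ?_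
    filter_upwards [hWb] with ω h
    rw [Real.norm_eq_abs, abs_pow]
    nlinarith [abs_nonneg (W ω)]
  have hWint : Integrable (fun ω => |W ω|) ℙ := by
    refine (integrable_const ((n:ℝ))).mono' (hWm.abs.aestronglyMeasurable) ?_
    filter_upwards [hWb] with ω h
    rwa [Real.norm_eq_abs, abs_abs]
  have hprodint : Integrable (fun ω => W ω ^ 2 * ind ω) ℙ := by
    refine (integrable_const ((n:ℝ)^2)).mono' ((hWm.pow_const 2).mul hindm |>.aestronglyMeasurable) ?_
    filter_upwards [hWb] with ω h
    rw [Real.norm_eq_abs, abs_mul, abs_pow]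
    have h2 : |ind ω| ≤ 1 := by
      rw [hind]; by_cases hω : ω ∈ A <;> simp [Set.indicator_of_mem, Set.indicator_of_notMem, hω]
    nlinarith [abs_nonneg (W ω), abs_nonneg (ind ω), pow_nonneg (abs_nonneg (W ω)) 2]
  have hcompint : Integrable (fun ω => W ω ^ 2 * Aᶜ.indicator (fun _ => (1:ℝ)) ω) ℙ := by
    refine (integrable_const ((n:ℝ)^2)).mono'
      ((hWm.pow_const 2).mul (measurable_const.indicator hAmeas.compl) |>.aestronglyMeasurable) ?_
    filter_upwards [hWb] with ω h
    rw [Real.norm_eq_abs, abs_mul, abs_pow]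
    have h2 : |Aᶜ.indicator (fun _ => (1:ℝ)) ω| ≤ 1 := by
      by_cases hω : ω ∈ Aᶜ <;> simp [Set.indicator_of_mem, Set.indicator_of_notMem, hω]
    nlinarith [abs_nonneg (W ω), abs_nonneg (Aᶜ.indicator (fun _ => (1:ℝ)) ω)]
  -- split
  have hsplit : ∫ ω, W ω ^ 2 ∂ℙ
      = ∫ ω, W ω ^ 2 * ind ω ∂ℙ + ∫ ω, W ω ^ 2 * Aᶜ.indicator (fun _ => (1:ℝ)) ω ∂ℙ := by
    rw [← integral_add hprodint hcompint]
    refine integral_congr_ae (Filter.Eventually.of_forall (fun ω => ?_))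
    simp only [hind, Set.indicator_apply, Set.mem_compl_iff]
    by_cases hω : ω ∈ A <;> simp [hω]
  have hcomp_le : ∫ ω, W ω ^ 2 * Aᶜ.indicator (fun _ => (1:ℝ)) ω ∂ℙ ≤ (n:ℝ)/2 := by
    have hptw : ∀ ω, W ω ^ 2 * Aᶜ.indicator (fun _ => (1:ℝ)) ω ≤ (n:ℝ)/2 := by
      intro ω
      by_cases hω : ω ∈ Aᶜ
      · have : ¬ ((n:ℝ)/2 ≤ W ω ^ 2) := hω
        simp only [Set.indicator_of_mem hω, mul_one]
        linarith [not_le.1 this]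
      · simp only [Set.indicator_of_notMem hω, mul_zero]
        positivity
    calc ∫ ω, W ω ^ 2 * Aᶜ.indicator (fun _ => (1:ℝ)) ω ∂ℙ
        ≤ ∫ _ω, (n:ℝ)/2 ∂ℙ := integral_mono hcompint (integrable_const _) hptw
      _ = (n:ℝ)/2 := by simp
  have hmain : (n:ℝ)/2 ≤ ∫ ω, W ω ^ 2 * ind ω ∂ℙ := by
    rw [hsplit] at hsq; linarith
  -- Cauchy–Schwarz
  set p : ℝ := (ℙ A).toReal with hp
  have hp0 : 0 ≤ p := ENNReal.toReal_nonneg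
  have hp1 : p ≤ 1 := by
    rw [hp]
    calc (ℙ A).toReal ≤ (ℙ Set.univ).toReal := by
          gcongr
          · exact measure_ne_top _ _
          · exact Set.subset_univ _
      _ = 1 := by simp
  have hCS : ∫ ω, W ω ^ 2 * ind ω ∂ℙ
      ≤ Real.sqrt (∫ ω, W ω ^ 4 ∂ℙ) * Real.sqrt p := by
    have hconj : Real.HolderConjugate 2 2 := by
      constructor <;> norm_num
    have hf2 : MemLp (fun ω => W ω ^ 2) (ENNReal.ofReal 2) ℙ := by
      refine MemLp.of_bound ((hWm.pow_const 2).aestronglyMeasurable) ((n:ℝ)^2) ?_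
      filter_upwards [hWb] with ω h
      rw [Real.norm_eq_abs, abs_pow]
      nlinarith [abs_nonneg (W ω)]
    have hg2 : MemLp ind (ENNReal.ofReal 2) ℙ := by
      refine MemLp.of_bound hindm.aestronglyMeasurable 1 ?_
      refine Filter.Eventually.of_forall (fun ω => ?_)
      rw [Real.norm_eq_abs, hind]
      by_cases hω : ω ∈ A <;> simp [Set.indicator_of_mem, Set.indicator_of_notMem, hω]
    have h := integral_mul_le_Lp_mul_Lq_of_nonneg hconj
      (Filter.Eventually.of_forall (fun ω => sq_nonneg (W ω)))
      (Filter.Eventually.of_forall (fun ω => by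
        rw [hind]; by_cases hω : ω ∈ A <;>
          simp [Set.indicator_of_mem, Set.indicator_of_notMem, hω]))
      hf2 hg2
    have hr2 : ∀ x:ℝ, x ^ (2:ℝ) = x ^ (2:ℕ) := fun x => by
      rw [← Real.rpow_natCast x 2]; norm_num
    have e1 : ∫ ω, (W ω ^ 2) ^ (2:ℝ) ∂ℙ = ∫ ω, W ω ^ 4 ∂ℙ := by
      have heq : (fun ω => (W ω ^ 2) ^ (2:ℝ)) = (fun ω => W ω ^ 4) := by
        funext ω; rw [hr2]; ring
      rw [heq]
    have e2 : ∫ ω, ind ω ^ (2:ℝ) ∂ℙ = p := by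
      have : ∀ ω, ind ω ^ (2:ℝ) = ind ω := by
        intro ω
        simp only [hind, Set.indicator_apply]
        by_cases hω : ω ∈ A
        · simp [hω]
        · simp [hω, Real.zero_rpow (by norm_num : (2:ℝ) ≠ 0)]
      rw [integral_congr_ae (Filter.Eventually.of_forall this), hind,
        integral_indicator_const _ hAmeas]
      simp [hp, Measure.real]
    rw [e1, e2] at h
    calc ∫ ω, W ω ^ 2 * ind ω ∂ℙ ≤ (∫ ω, W ω ^ 4 ∂ℙ) ^ (1/(2:ℝ)) * p ^ (1/(2:ℝ)) := h
      _ = Real.sqrt (∫ ω, W ω ^ 4 ∂ℙ) * Real.sqrt p := by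
          rw [Real.sqrt_eq_rpow, Real.sqrt_eq_rpow]
  have h4le : Real.sqrt (∫ ω, W ω ^ 4 ∂ℙ) ≤ Real.sqrt 3 * (n:ℝ) := by
    calc Real.sqrt (∫ ω, W ω ^ 4 ∂ℙ) ≤ Real.sqrt (3 * (n:ℝ)^2) := Real.sqrt_le_sqrt hquart
      _ = Real.sqrt 3 * (n:ℝ) := by
          rw [Real.sqrt_mul (by norm_num) ((n:ℝ)^2), Real.sqrt_sq (by positivity)]
  have hfinal : (n:ℝ)/2 ≤ Real.sqrt 3 * (n:ℝ) * Real.sqrt p := by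
    calc (n:ℝ)/2 ≤ ∫ ω, W ω ^ 2 * ind ω ∂ℙ := hmain
      _ ≤ Real.sqrt (∫ ω, W ω ^ 4 ∂ℙ) * Real.sqrt p := hCS
      _ ≤ Real.sqrt 3 * (n:ℝ) * Real.sqrt p := by
          have := Real.sqrt_nonneg p
          nlinarith [Real.sqrt_nonneg (∫ ω, W ω ^ 4 ∂ℙ)]
  have h12 : (1:ℝ)/2 ≤ Real.sqrt 3 * Real.sqrt p := by
    by_contra hcon
    push_neg at hcon
    have hnpos : (0:ℝ) < (n:ℝ) := by linarith
    nlinarith [hfinal]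
  have hp12 : (1:ℝ)/12 ≤ p := by
    have hs := Real.sq_sqrt hp0
    have h3 := Real.sq_sqrt (show (0:ℝ) ≤ 3 by norm_num)
    nlinarith [Real.sqrt_nonneg p, Real.sqrt_nonneg 3, h12]
  -- conclude
  have hindint : Integrable ind ℙ := (integrable_const (1:ℝ)).indicator hAmeas
  have hlow : Real.sqrt ((n:ℝ)/2) * p ≤ ∫ ω, |W ω| ∂ℙ := by
    have hptw : ∀ ω, Real.sqrt ((n:ℝ)/2) * ind ω ≤ |W ω| := by
      intro ω
      by_cases hω : ω ∈ A
      · rw [hind, Set.indicator_of_mem hω, mul_one]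
        have h1 : Real.sqrt ((n:ℝ)/2) ≤ Real.sqrt (W ω ^ 2) := Real.sqrt_le_sqrt hω
        rwa [Real.sqrt_sq_eq_abs] at h1
      · rw [hind, Set.indicator_of_notMem hω, mul_zero]
        exact abs_nonneg _
    calc Real.sqrt ((n:ℝ)/2) * p = ∫ ω, Real.sqrt ((n:ℝ)/2) * ind ω ∂ℙ := by
          rw [integral_const_mul, hind, integral_indicator_const _ hAmeas]
          simp [hp, Measure.real]
      _ ≤ ∫ ω, |W ω| ∂ℙ :=
          integral_mono (hindint.const_mul _) hWint hptw
  have hsq2 : Real.sqrt ((n:ℝ)/2) = Real.sqrt n / Real.sqrt 2 := by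
    rw [Real.sqrt_div (by positivity)]
  have h2le : Real.sqrt 2 ≤ 3/2 := by
    rw [show (3/2:ℝ) = Real.sqrt ((3/2)^2) from (Real.sqrt_sq (by norm_num)).symm]
    exact Real.sqrt_le_sqrt (by norm_num)
  have hs2pos : (0:ℝ) < Real.sqrt 2 := Real.sqrt_pos.2 (by norm_num)
  have hsn : (0:ℝ) ≤ Real.sqrt n := Real.sqrt_nonneg _
  have hkey : Real.sqrt n * (2/3) ≤ Real.sqrt ((n:ℝ)/2) := by
    rw [hsq2, div_eq_mul_inv]
    have hinv : (2/3:ℝ) ≤ (Real.sqrt 2)⁻¹ := by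
      have h1 : (2/3:ℝ) * Real.sqrt 2 ≤ 1 := by nlinarith
      calc (2/3:ℝ) = (2/3) * Real.sqrt 2 * (Real.sqrt 2)⁻¹ := by
            rw [mul_assoc, mul_inv_cancel₀ (ne_of_gt hs2pos), mul_one]
        _ ≤ 1 * (Real.sqrt 2)⁻¹ := mul_le_mul_of_nonneg_right h1 (by positivity)
        _ = _ := one_mul _
    exact mul_le_mul_of_nonneg_left hinv hsn
  calc Real.sqrt n / 18 = (Real.sqrt n * (2/3)) * (1/12) := by ring
    _ ≤ Real.sqrt ((n:ℝ)/2) * (1/12) := by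
        have := Real.sqrt_nonneg ((n:ℝ)/2)
        nlinarith [hkey]
    _ ≤ Real.sqrt ((n:ℝ)/2) * p := by
        have := Real.sqrt_nonneg ((n:ℝ)/2)
        nlinarith [hp12]
    _ ≤ ∫ ω, |W ω| ∂ℙ := hlow
end

section helpers

lemma sum_tele (a : ℕ) (ha : 1 ≤ a) (n : ℕ) :
    ∑ t ∈ Ico a n, (1:ℝ)/((t:ℝ)+1)^2 ≤ 1/(a:ℝ) := by
  have ha' : (1:ℝ) ≤ (a:ℝ) := by exact_mod_cast ha
  have key : ∀ m, a ≤ m → ∑ t ∈ Ico a m, (1:ℝ)/((t:ℝ)+1)^2 ≤ 1/(a:ℝ) - 1/(m:ℝ) := by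
    intro m hm
    induction m, hm using Nat.le_induction with
    | base => simp
    | succ m hm ih =>
      rw [Finset.sum_Ico_succ_top hm]
      have hm1 : (1:ℝ) ≤ (m:ℝ) := by exact_mod_cast le_trans ha hm
      have hstep : (1:ℝ)/((m:ℝ)+1)^2 ≤ 1/(m:ℝ) - 1/((m:ℝ)+1) := by
        rw [div_sub_div _ _ (by linarith) (by linarith), div_le_div_iff₀ (by positivity) (by positivity)]
        ring_nf
        nlinarith
      push_cast
      linarith [ih]
  rcases le_or_gt a n with h | h
  · have h1 := key n h
    have h2 : (0:ℝ) ≤ 1/(n:ℝ) := by positivity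
    linarith
  · rw [Finset.Ico_eq_empty (by omega)]
    simp only [Finset.sum_empty]
    positivity

lemma image_range_eq (v : ℕ → ℤ) (n : ℕ) :
    (range (n+1)).image v = Finset.univ.image (fun i : Fin (n+1) => v i) := by
  ext z
  simp only [Finset.mem_image, Finset.mem_range, Finset.mem_univ, true_and]
  constructor
  · rintro ⟨k, hk, rfl⟩; exact ⟨⟨k, hk⟩, rfl⟩
  · rintro ⟨i, rfl⟩; exact ⟨i.val, i.isLt, rfl⟩

lemma sup_range_eq (u : ℕ → ℕ) (n : ℕ) :
    (range (n+1)).sup u = Finset.univ.sup (fun i : Fin (n+1) => u i) :=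
  le_antisymm
    (Finset.sup_le fun k hk =>
      Finset.le_sup (f := fun i : Fin (n+1) => u i) (Finset.mem_univ ⟨k, Finset.mem_range.1 hk⟩))
    (Finset.sup_le fun i _ => Finset.le_sup (f := u) (Finset.mem_range.2 i.isLt))

instance msc_pi (n : ℕ) : MeasurableSingletonClass (Fin (n+1) → ℤ) := ⟨fun v => by
  have h : {v} = ⋂ i, (fun w : Fin (n+1) → ℤ => w i) ⁻¹' {v i} := by
    ext w; simp [funext_iff]
  rw [h]
  exact MeasurableSet.iInter fun i => (measurable_pi_apply i) (measurableSet_singleton _)⟩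

lemma natAbs_cast_eq (m : ℤ) : ((m.natAbs : ℕ) : ℝ) = |(m : ℝ)| := by
  rw [Nat.cast_natAbs, Int.cast_abs]

end helpers
set_option maxHeartbeats 1000000 in
/-- For the simple symmetric random walk on ℤ (steps i.i.d. uniform on `{-1, 1}`),
the expected range `E[R n]` (number of distinct sites visited among times `0,…,n`,
including the starting point) satisfies `E[R n] ≍ √n`. -/
theorem expected_range_asymp_sqrt {Ω : Type*} [MeasurableSpace Ω]
    (ℙ : Measure Ω) [IsProbabilityMeasure ℙ]
    (X : ℕ → Ω → ℤ) (hmeas : ∀ k, Measurable (X k))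
    (hindep : ProbabilityTheory.iIndepFun X ℙ)
    (hdist : ∀ k, ℙ {ω | X k ω = 1} = 1 / 2 ∧ ℙ {ω | X k ω = -1} = 1 / 2)
    (S : ℕ → Ω → ℤ) (hS : ∀ n ω, S n ω = ∑ k ∈ range n, X k ω)
    (R : ℕ → Ω → ℕ) (hR : ∀ n ω, R n ω = ((range (n + 1)).image (fun k => S k ω)).card) :
    ∃ c C : ℝ, 0 < c ∧ 0 < C ∧ ∀ n : ℕ, 1 ≤ n →
      c * Real.sqrt n ≤ ∫ ω, (R n ω : ℝ) ∂ℙ ∧ (∫ ω, (R n ω : ℝ) ∂ℙ) ≤ C * Real.sqrt n := by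
  classical
  -- basic measurability
  have hSm : ∀ k, Measurable (S k) := by
    intro k
    have h : S k = fun ω => ∑ j ∈ range k, X j ω := funext (hS k)
    rw [h]
    exact Finset.measurable_sum _ (fun j _ => hmeas j)
  -- the real-valued steps
  set Y : ℕ → Ω → ℝ := fun k ω => ((X k ω : ℤ) : ℝ) with hY
  have hYm : ∀ k, Measurable (Y k) := fun k => (measurable_of_countable _).comp (hmeas k)
  have hYindep : ProbabilityTheory.iIndepFun Y ℙ :=
    hindep.comp (fun _ => ((↑) : ℤ → ℝ)) (fun _ => measurable_of_countable _)
  -- almost sure ±1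
  have haeX : ∀ᵐ ω ∂ℙ, ∀ k, X k ω = 1 ∨ X k ω = -1 := by
    rw [ae_all_iff]
    intro k
    have hA : MeasurableSet {ω | X k ω = 1} := hmeas k (measurableSet_singleton 1)
    have hB : MeasurableSet {ω | X k ω = -1} := hmeas k (measurableSet_singleton (-1))
    have hdisj : Disjoint {ω | X k ω = 1} {ω | X k ω = -1} := by
      rw [Set.disjoint_left]
      intro ω h1 h2
      simp only [Set.mem_setOf_eq] at h1 h2
      omega
    have hunion : ℙ ({ω | X k ω = 1} ∪ {ω | X k ω = -1}) = 1 := by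
      rw [measure_union hdisj hB, (hdist k).1, (hdist k).2, ENNReal.add_halves]
    rw [ae_iff]
    have hset : {ω | ¬(X k ω = 1 ∨ X k ω = -1)}
        = ({ω | X k ω = 1} ∪ {ω | X k ω = -1})ᶜ := by
      ext ω; simp [not_or]
    rw [hset, measure_compl (hA.union hB) (measure_ne_top _ _), hunion, measure_univ,
      tsub_self]
  have haeY : ∀ᵐ ω ∂ℙ, ∀ k, Y k ω = 1 ∨ Y k ω = -1 := by
    filter_upwards [haeX] with ω hω k
    rcases hω k with h | h <;> simp [hY, h]
  -- mean zero
  have hEY : ∀ k, ∫ ω, Y k ω ∂ℙ = 0 := by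
    intro k
    have hA : MeasurableSet {ω | X k ω = 1} := hmeas k (measurableSet_singleton 1)
    have hB : MeasurableSet {ω | X k ω = -1} := hmeas k (measurableSet_singleton (-1))
    have heq : Y k =ᵐ[ℙ] fun ω => ({ω | X k ω = 1}.indicator (fun _ => (1:ℝ)) ω
        - {ω | X k ω = -1}.indicator (fun _ => (1:ℝ)) ω) := by
      filter_upwards [haeX] with ω hω
      rcases hω k with h | h
      · rw [Set.indicator_of_mem (by exact h), Set.indicator_of_notMem (by simp [h])]
        simp [hY, h]
      · rw [Set.indicator_of_notMem (by simp [h]), Set.indicator_of_mem (by exact h)]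
        simp [hY, h]
    rw [integral_congr_ae heq, integral_sub ((integrable_const (1:ℝ)).indicator hA)
      ((integrable_const (1:ℝ)).indicator hB), integral_indicator_const _ hA,
      integral_indicator_const _ hB, measureReal_def, measureReal_def, (hdist k).1, (hdist k).2, sub_self]
  obtain ⟨hsq, hquart⟩ := moments hYm hYindep haeY hEY
  have hcastS : ∀ k ω, ∑ j ∈ range k, Y j ω = ((S k ω : ℤ) : ℝ) := by
    intro k ω
    rw [hS]
    push_cast
    rfl
  refine ⟨1/18, 7, by norm_num, by norm_num, fun n hn => ?_⟩
  have hn1 : (1:ℝ) ≤ (n:ℝ) := by exact_mod_cast hn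
  have hsn1 : (1:ℝ) ≤ Real.sqrt n := by
    rw [show (1:ℝ) = Real.sqrt 1 from (Real.sqrt_one).symm]
    exact Real.sqrt_le_sqrt hn1
  -- measurability of R and M
  set M : Ω → ℕ := fun ω => (range (n+1)).sup (fun k => (S k ω).natAbs) with hM
  have hφm : Measurable (fun ω (i : Fin (n+1)) => S i.val ω) :=
    measurable_pi_lambda _ (fun i => hSm i.val)
  have hRm : Measurable (fun ω => (R n ω : ℝ)) := by
    have h : (fun ω => (R n ω : ℝ))
        = (fun v : Fin (n+1) → ℤ => ((Finset.univ.image v).card : ℝ))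
          ∘ (fun ω (i : Fin (n+1)) => S i.val ω) := by
      funext ω
      simp only [Function.comp_apply, hR]
      rw [image_range_eq (fun k => S k ω) n]
    rw [h]
    exact (measurable_of_countable _).comp hφm
  have hMmn : Measurable M := by
    have h : M = (fun v : Fin (n+1) → ℤ => Finset.univ.sup (fun i => (v i).natAbs))
        ∘ (fun ω (i : Fin (n+1)) => S i.val ω) := by
      funext ω
      simp only [Function.comp_apply, hM]
      rw [sup_range_eq (fun k => (S k ω).natAbs) n]
    rw [h]
    exact (measurable_of_countable _).comp hφm
  have hMm : Measurable (fun ω => (M ω : ℝ)) := (measurable_of_countable _).comp hMmn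
  -- a.e. bounds
  have hMb : ∀ᵐ ω ∂ℙ, (M ω : ℝ) ≤ n := by
    filter_upwards [haeY] with ω hω
    have h : M ω ≤ n := by
      refine Finset.sup_le (fun k hk => ?_)
      have hk' : k ≤ n := Nat.lt_succ_iff.1 (Finset.mem_range.1 hk)
      have h1 : |∑ j ∈ range k, Y j ω| ≤ (k:ℝ) := by
        calc |∑ j ∈ range k, Y j ω| ≤ ∑ j ∈ range k, |Y j ω| := Finset.abs_sum_le_sum_abs _ _
          _ ≤ ∑ _j ∈ range k, (1:ℝ) :=
            Finset.sum_le_sum (fun j _ => by rcases hω j with h | h <;> simp [h])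
          _ = k := by simp
      rw [hcastS k ω, ← natAbs_cast_eq] at h1
      have h3 : (S k ω).natAbs ≤ k := by exact_mod_cast h1
      omega
    exact_mod_cast h
  have hRb : ∀ ω, (R n ω : ℝ) ≤ (n:ℝ) + 1 := by
    intro ω
    have h : R n ω ≤ n + 1 := by
      rw [hR]
      exact le_trans Finset.card_image_le (by simp)
    exact_mod_cast h
  have hRint : Integrable (fun ω => (R n ω : ℝ)) ℙ := by
    refine bdd_integrable (C := (n:ℝ)+1) hRm ?_
    refine Filter.Eventually.of_forall (fun ω => ?_)
    rw [abs_of_nonneg (by positivity)]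
    exact hRb ω
  have hMint : Integrable (fun ω => (M ω : ℝ)) ℙ := by
    refine bdd_integrable (C := (n:ℝ)) hMm ?_
    filter_upwards [hMb] with ω h
    rwa [abs_of_nonneg (by positivity)]
  constructor
  -- LOWER BOUND
  · have hWm : Measurable (fun ω => ∑ k ∈ range n, Y k ω) :=
      Finset.measurable_sum _ (fun k _ => hYm k)
    have hWb := sum_abs_le haeY n
    have hlow := first_abs_moment hWm hn hWb (hsq n) (hquart n)
    have hWR : ∀ᵐ ω ∂ℙ, |∑ k ∈ range n, Y k ω| ≤ (R n ω : ℝ) := by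
      filter_upwards [haeX] with ω hω
      have hstep : ∀ k < n, ((fun j => S j ω) (k+1) - (fun j => S j ω) k).natAbs ≤ 1 := by
        intro k _
        have h : S (k+1) ω - S k ω = X k ω := by
          rw [hS, hS, Finset.sum_range_succ]; ring
        simp only [h]
        rcases hω k with h' | h' <;> simp [h']
      have h0 : (fun j => S j ω) 0 = 0 := by show S 0 ω = 0; rw [hS]; simp
      have hcard := walk_card_ge (fun j => S j ω) n h0 hstep
      have hcard' : (S n ω).natAbs + 1 ≤ R n ω := by rw [hR]; exact hcard
      have h1 : ((S n ω).natAbs : ℝ) ≤ (R n ω : ℝ) := by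
        have h2 : (S n ω).natAbs ≤ R n ω := by omega
        exact_mod_cast h2
      rw [hcastS n ω, ← natAbs_cast_eq]
      exact h1
    have hWint : Integrable (fun ω => |∑ k ∈ range n, Y k ω|) ℙ := by
      refine bdd_integrable (C := (n:ℝ)) hWm.abs ?_
      filter_upwards [hWb] with ω h
      rwa [abs_abs]
    calc (1/18) * Real.sqrt n = Real.sqrt n / 18 := by ring
      _ ≤ ∫ ω, |∑ k ∈ range n, Y k ω| ∂ℙ := hlow
      _ ≤ ∫ ω, (R n ω : ℝ) ∂ℙ := integral_mono_ae hWint hRint hWR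
  -- UPPER BOUND
  · set a : ℕ := Nat.sqrt n + 1 with ha
    have ha1 : 1 ≤ a := by omega
    -- tail bounds
    have htail : ∀ t : ℕ, (ℙ {ω | t + 1 ≤ M ω}).toReal ≤ (n:ℝ) / ((t:ℝ)+1)^2 := by
      intro t
      have hseteq : {ω | t + 1 ≤ M ω}
          = {ω | ∃ k, k ≤ n ∧ ((t:ℝ)+1) ≤ |∑ j ∈ range k, Y j ω|} := by
        ext ω
        simp only [Set.mem_setOf_eq, hM]
        rw [Finset.le_sup_iff (by exact Nat.succ_pos t : ⊥ < t + 1)]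
        constructor
        · rintro ⟨k, hk, hge⟩
          refine ⟨k, Nat.lt_succ_iff.1 (Finset.mem_range.1 hk), ?_⟩
          rw [hcastS k ω, ← natAbs_cast_eq]
          have h5 : ((t+1 : ℕ) : ℝ) ≤ ((S k ω).natAbs : ℝ) := by exact_mod_cast hge
          push_cast at h5 ⊢
          linarith
        · rintro ⟨k, hk, hge⟩
          refine ⟨k, Finset.mem_range.2 (by omega), ?_⟩
          rw [hcastS k ω, ← natAbs_cast_eq] at hge
          have h5 : ((t+1 : ℕ) : ℝ) ≤ ((S k ω).natAbs : ℝ) := by push_cast; linarith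
          exact_mod_cast h5
      rw [hseteq]
      exact tail_bound hYm hYindep haeY hEY hsq n t hn
    -- layer cake
    have hlayer : ∫ ω, (M ω : ℝ) ∂ℙ
        ≤ (a:ℝ) + ∑ t ∈ Ico a n, (ℙ {ω | t + 1 ≤ M ω}).toReal := by
      have hindmeas : ∀ t : ℕ, MeasurableSet {ω | t + 1 ≤ M ω} :=
        fun t => hMmn (measurableSet_Ici (a := t+1))
      have hptw : ∀ᵐ ω ∂ℙ, (M ω : ℝ)
          ≤ (a:ℝ) + ∑ t ∈ Ico a n, ({ω' | t + 1 ≤ M ω'}).indicator (fun _ => (1:ℝ)) ω := by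
        filter_upwards [hMb] with ω hMn
        have hMn' : M ω ≤ n := by exact_mod_cast hMn
        have hcardle : M ω ≤ a + ((Ico a n).filter (fun t => t + 1 ≤ M ω)).card := by
          rcases le_or_gt (M ω) a with h | h
          · omega
          · have hsub : Ico a (M ω) ⊆ (Ico a n).filter (fun t => t + 1 ≤ M ω) := by
              intro t ht
              rw [Finset.mem_filter, Finset.mem_Ico]
              rw [Finset.mem_Ico] at ht
              exact ⟨⟨ht.1, by omega⟩, by omega⟩
            have := Finset.card_le_card hsub
            rw [Nat.card_Ico] at this
            omega
        have hsum : ∑ t ∈ Ico a n, ({ω' | t + 1 ≤ M ω'}).indicator (fun _ => (1:ℝ)) ω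
            = (((Ico a n).filter (fun t => t + 1 ≤ M ω)).card : ℝ) := by
          rw [← Finset.sum_boole]
          refine Finset.sum_congr rfl (fun t _ => ?_)
          rw [Set.indicator_apply]
          simp only [Set.mem_setOf_eq]
        rw [hsum]
        exact_mod_cast hcardle
      have hintsum : Integrable (fun ω => (a:ℝ)
          + ∑ t ∈ Ico a n, ({ω' | t + 1 ≤ M ω'}).indicator (fun _ => (1:ℝ)) ω) ℙ := by
        refine (integrable_const ((a:ℝ))).add ?_
        refine integrable_finset_sum _ (fun t _ => ?_)
        exact (integrable_const (1:ℝ)).indicator (hindmeas t)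
      calc ∫ ω, (M ω : ℝ) ∂ℙ
          ≤ ∫ ω, ((a:ℝ) + ∑ t ∈ Ico a n, ({ω' | t + 1 ≤ M ω'}).indicator (fun _ => (1:ℝ)) ω) ∂ℙ :=
            integral_mono_ae hMint hintsum hptw
        _ = (a:ℝ) + ∑ t ∈ Ico a n, (ℙ {ω | t + 1 ≤ M ω}).toReal := by
            rw [integral_add (integrable_const _) (integrable_finset_sum _
              (fun t _ => (integrable_const (1:ℝ)).indicator (hindmeas t))),
              integral_const, integral_finset_sum _
              (fun t _ => (integrable_const (1:ℝ)).indicator (hindmeas t))]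
            simp only [Measure.real, measure_univ, ENNReal.toReal_one, smul_eq_mul, one_mul]
            congr 1
            refine Finset.sum_congr rfl (fun t _ => ?_)
            rw [integral_indicator_const _ (hindmeas t)]
            simp [Measure.real]
    -- sum the tails
    have hsumtail : ∑ t ∈ Ico a n, (ℙ {ω | t + 1 ≤ M ω}).toReal ≤ (n:ℝ)/(a:ℝ) := by
      calc ∑ t ∈ Ico a n, (ℙ {ω | t + 1 ≤ M ω}).toReal
          ≤ ∑ t ∈ Ico a n, (n:ℝ)/((t:ℝ)+1)^2 := Finset.sum_le_sum (fun t _ => htail t)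
        _ = (n:ℝ) * ∑ t ∈ Ico a n, (1:ℝ)/((t:ℝ)+1)^2 := by
            rw [Finset.mul_sum]
            refine Finset.sum_congr rfl (fun t _ => ?_)
            ring
        _ ≤ (n:ℝ) * (1/(a:ℝ)) := by
            have h := sum_tele a ha1 n
            have hn0 : (0:ℝ) ≤ n := by positivity
            nlinarith [h]
        _ = (n:ℝ)/(a:ℝ) := by ring
    -- bound a and n/a by √n
    have hcast_a : (a:ℝ) = (Nat.sqrt n : ℝ) + 1 := by rw [ha]; push_cast; ring
    have hsqrt_le : (Nat.sqrt n : ℝ) ≤ Real.sqrt n := by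
      have h1 : ((Nat.sqrt n : ℝ))^2 ≤ (n:ℝ) := by
        have h2 : Nat.sqrt n * Nat.sqrt n ≤ n := Nat.sqrt_le n
        rw [pow_two]
        exact_mod_cast h2
      calc (Nat.sqrt n : ℝ) = Real.sqrt ((Nat.sqrt n : ℝ)^2) := (Real.sqrt_sq (by positivity)).symm
        _ ≤ Real.sqrt n := Real.sqrt_le_sqrt h1
    have hle_a : Real.sqrt n ≤ (a:ℝ) := by
      have h1 : (n:ℝ) ≤ ((a:ℝ))^2 := by
        have h2 : n < a * a := by rw [ha]; exact Nat.lt_succ_sqrt n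
        rw [pow_two]
        exact_mod_cast le_of_lt h2
      calc Real.sqrt n ≤ Real.sqrt ((a:ℝ)^2) := Real.sqrt_le_sqrt h1
        _ = (a:ℝ) := Real.sqrt_sq (by positivity)
    have hna : (n:ℝ)/(a:ℝ) ≤ Real.sqrt n := by
      have hspos : (0:ℝ) < Real.sqrt n := by linarith
      calc (n:ℝ)/(a:ℝ) ≤ (n:ℝ)/Real.sqrt n :=
            div_le_div_of_nonneg_left (by positivity) hspos hle_a
        _ = Real.sqrt n := Real.div_sqrt
    -- E M ≤ 3 √n
    have hEM : ∫ ω, (M ω : ℝ) ∂ℙ ≤ 3 * Real.sqrt n := by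
      calc ∫ ω, (M ω : ℝ) ∂ℙ ≤ (a:ℝ) + (n:ℝ)/(a:ℝ) := le_trans hlayer (by linarith [hsumtail])
        _ ≤ (Real.sqrt n + 1) + Real.sqrt n := by
            have ha2 : (a:ℝ) ≤ Real.sqrt n + 1 := by rw [hcast_a]; linarith [hsqrt_le]
            linarith [hna, ha2]
        _ ≤ 3 * Real.sqrt n := by linarith [hsn1]
    -- R ≤ 2M + 1
    have hRM : ∀ ω, (R n ω : ℝ) ≤ 2 * (M ω : ℝ) + 1 := by
      intro ω
      have h := walk_card_le (fun j => S j ω) n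
      rw [← hR] at h
      have h2 : (R n ω : ℝ) ≤ ((2 * M ω + 1 : ℕ) : ℝ) := by exact_mod_cast h
      push_cast at h2
      linarith
    calc ∫ ω, (R n ω : ℝ) ∂ℙ ≤ ∫ ω, (2 * (M ω : ℝ) + 1) ∂ℙ :=
          integral_mono hRint ((hMint.const_mul 2).add (integrable_const 1))
            (fun ω => hRM ω)
      _ = 2 * (∫ ω, (M ω : ℝ) ∂ℙ) + 1 := by
          rw [integral_add (hMint.const_mul 2) (integrable_const 1),
            integral_const_mul (2:ℝ) _, integral_const]
          simp
      _ ≤ 2 * (3 * Real.sqrt n) + 1 := by linarith [hEM]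
      _ ≤ 7 * Real.sqrt n := by linarith [hsn1]
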